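/- Over a field k of characteristic ≠ 2, let C: y^2 = F(x) be a genus 2 curve with F squarefree of degree 6. Suppose F(x) = G(x)^2 + 4λ H(x)^3 with deg G = 3, deg H = 2, λ ∈ k*, and gcd(G,H)=1. Let D1 be the effective degree 2 divisor cut out by H(x) = 0, y = G(x), and let κ be the canonical divisor supported at infinity. Then the divisor class [D1 - κ] ∈ Pic^0(C) has order dividing 3; in fact 3(D1 - κ) is the divisor of the function (y - G(x)). -/

import Mathlib

open MvPolynomial Pointwise
set_option maxHeartbeats 1000000

/-- Embed `k[x]` into `k[x,y] = MvPolynomial (Fin 2) k` via `x ↦ X 0`. -/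
noncomputable def toXY {k : Type} [Field k] : Polynomial k →ₐ[k] MvPolynomial (Fin 2) k :=
  Polynomial.aeval (X 0)

/-- Let `C : y² = F(x)` be a genus-2 curve over a field `k` of characteristic `≠ 2`, with `F`
squarefree of degree `6`, and suppose `F = G² + 4λH³` with `deg G = 3`, `deg H = 2`, `λ ≠ 0`
and `gcd(G,H) = 1`.  Let `D₁` be the effective degree-2 divisor cut out by `H(x) = 0`,
`y = G(x)`, and `κ` the canonical divisor at infinity.  Then `3(D₁ - κ)` is the divisor of
the function `(y - G(x))/z³`; on the affine coordinate ring `k[x,y]/(y² - F)` this is the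
ideal identity `(H, y - G)³ = (y - G)`, so the class `[D₁ - κ] ∈ Pic⁰(C)` has order
dividing `3`. -/
theorem three_torsion_from_decomposition (k : Type) [Field k] (h2 : (2 : k) ≠ 0)
    (F G H : Polynomial k) (lam : k)
    (hFsf : Squarefree F) (hFdeg : F.natDegree = 6)
    (hGdeg : G.natDegree = 3) (hHdeg : H.natDegree = 2) (hlam : lam ≠ 0)
    (hcop : IsCoprime G H)
    (hdec : F = G ^ 2 + Polynomial.C (4 * lam) * H ^ 3) :
    letI I : Ideal (MvPolynomial (Fin 2) k) := Ideal.span {(X 1) ^ 2 - toXY F}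
    (Ideal.span {Ideal.Quotient.mk I (toXY H),
        Ideal.Quotient.mk I (X 1 - toXY G)}) ^ 3
      = Ideal.span {Ideal.Quotient.mk I (X 1 - toXY G)} := by
  set I : Ideal (MvPolynomial (Fin 2) k) := Ideal.span {(X 1) ^ 2 - toXY F} with hI
  set π := Ideal.Quotient.mk I with hπ
  set u := π (X 1 - toXY G) with hu
  set hh := π (toXY H) with hhh
  set g := π (toXY G) with hg
  set c := π (MvPolynomial.C (4 * lam)) with hc
  -- key relation
  have hXF : π ((X 1)^2) = π (toXY F) := by
    rw [Ideal.Quotient.mk_eq_mk_iff_sub_mem]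
    exact Ideal.subset_span rfl
  have rel : u * (u + 2 * g) = c * hh ^ 3 := by
    have : u + 2 * g = π (X 1 + toXY G) := by
      simp only [hu, hg, map_sub, map_add]; ring
    rw [this, hu, ← map_mul]
    have h1 : (X 1 - toXY G) * (X 1 + toXY G) = (X 1 : MvPolynomial (Fin 2) k)^2 - (toXY G)^2 := by ring
    rw [h1, map_sub, hXF, hdec]
    have : toXY (G ^ 2 + Polynomial.C (4 * lam) * H ^ 3)
        = (toXY G)^2 + MvPolynomial.C (4 * lam) * (toXY H)^3 := by
      simp [toXY, map_add, map_mul, map_pow, Polynomial.aeval_C]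
    rw [this, map_add, map_mul, map_pow, map_pow, hc, MvPolynomial.C_mul, map_mul]
    ring
  have h4 : (4:k) ≠ 0 := by
    have h42 : (4:k) = 2*2 := by norm_num
    rw [h42]; exact mul_ne_zero h2 h2
  have hc4 : (4*lam : k) ≠ 0 := mul_ne_zero h4 hlam
  have hcinv : c * π (MvPolynomial.C (4*lam)⁻¹) = 1 := by
    rw [hc, hπ, ← map_mul, ← MvPolynomial.C_mul, mul_inv_cancel₀ hc4, MvPolynomial.C_1, map_one]
  set J := Ideal.span {hh, u} with hJ
  apply le_antisymm
  · have hsp : (Ideal.span {hh, u} : Ideal (MvPolynomial (Fin 2) k ⧸ I)) ^ 3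
        = Ideal.span (({hh, u} : Set (MvPolynomial (Fin 2) k ⧸ I)) ^ 3) :=
      Submodule.span_pow _ 3
    rw [hJ, hsp]
    apply Ideal.span_le.2
    intro x hx
    have h3 : ({hh, u} : Set _) ^ 3 = {hh,u} * {hh,u} * {hh,u} := by
      rw [pow_succ, pow_succ, pow_one]
    rw [h3] at hx
    rcases hx with ⟨y, hy, z, hz, rfl⟩
    rcases hy with ⟨y1, hy1, y2, hy2, rfl⟩
    have mem2 : ∀ w, w ∈ ({hh, u} : Set _) → w = hh ∨ w = u := by
      intro w hw; rcases hw with h | h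
      · exact Or.inl h
      · exact Or.inr h
    have hh3 : hh * hh * hh ∈ Ideal.span {u} := by
      rw [Ideal.mem_span_singleton]
      refine ⟨π (MvPolynomial.C (4*lam)⁻¹) * (u + 2*g), ?_⟩
      linear_combination (-(π (MvPolynomial.C (4*lam)⁻¹)))*rel + (-(hh^3))*hcinv
    have hum : u ∈ Ideal.span {u} := Ideal.subset_span rfl
    rcases mem2 _ hy1 with rfl | rfl <;> rcases mem2 _ hy2 with rfl | rfl <;>
      rcases mem2 _ hz with rfl | rfl
    all_goals first
      | exact hh3
      | exact Ideal.mul_mem_left _ _ hum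
      | exact Ideal.mul_mem_right _ _ (Ideal.mul_mem_left _ _ hum)
      | exact Ideal.mul_mem_right _ _ (Ideal.mul_mem_right _ _ hum)
  · apply Ideal.span_le.2
    rintro x (rfl : x = u)
    have hhJ : hh ∈ J := Ideal.subset_span (by simp)
    have huJ : u ∈ J := Ideal.subset_span (by simp)
    have m1 : hh^3 ∈ J^3 := Ideal.pow_mem_pow hhJ 3
    have m2 : hh^2*u ∈ J^3 := by
      have := Ideal.mul_mem_mul (Ideal.pow_mem_pow hhJ 2) huJ
      convert this using 1
      exact pow_succ J 2
    have m3 : hh*u^2 ∈ J^3 := by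
      have := Ideal.mul_mem_mul hhJ (Ideal.pow_mem_pow huJ 2)
      convert this using 1
      exact pow_succ' J 2
    have m4 : u^3 ∈ J^3 := Ideal.pow_mem_pow huJ 3
    obtain ⟨a, b, hab⟩ := hcop
    set A := π (toXY a) with hA
    set B := π (toXY b) with hB
    have habQ : A * g + B * hh = 1 := by
      have h0 : toXY a * toXY G + toXY b * toXY H = 1 := by
        rw [← map_mul, ← map_mul, ← map_add, hab, map_one]
      calc A * g + B * hh = π (toXY a * toXY G + toXY b * toXY H) := by
            rw [map_add, map_mul, map_mul]
        _ = 1 := by rw [h0, map_one]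
    have key : (4 : MvPolynomial (Fin 2) k ⧸ I) * u
        = (A^2*(2*c*g - c*u) + 4*c*A*B*hh) * hh^3 + (-(4*A*B))*(hh*u^2)
          + A^2*u^3 + 4*B^2*(hh^2*u) := by
      linear_combination (-(4*u)*(A*g+B*hh+1)) * habQ + (A^2*(2*g-u) + 4*A*B*hh) * rel
    have h4u : (4 : MvPolynomial (Fin 2) k ⧸ I) * u ∈ J^3 := by
      rw [key]
      exact add_mem (add_mem (add_mem (Ideal.mul_mem_left _ _ m1)
        (Ideal.mul_mem_left _ _ m3)) (Ideal.mul_mem_left _ _ m4))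
        (Ideal.mul_mem_left _ _ m2)
    have hu4 : u = π (MvPolynomial.C (4:k)⁻¹) * ((4 : MvPolynomial (Fin 2) k ⧸ I) * u) := by
      have h41 : π (MvPolynomial.C (4:k)⁻¹) * (4 : MvPolynomial (Fin 2) k ⧸ I) = 1 := by
        have h4Q : (4 : MvPolynomial (Fin 2) k ⧸ I) = π (MvPolynomial.C (4:k)) := by
          have hC4 : (MvPolynomial.C (4:k) : MvPolynomial (Fin 2) k) = 4 := map_ofNat _ 4
          rw [hC4, map_ofNat]
        rw [h4Q, hπ, ← map_mul, ← MvPolynomial.C_mul, inv_mul_cancel₀ h4, MvPolynomial.C_1, map_one]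
      rw [← mul_assoc, h41, one_mul]
    rw [hu4]
    exact Ideal.mul_mem_left _ _ h4u
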